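/- arXiv:2404.08775 — 2 statements merged into one kernel-verified Lean document; each statement's English description precedes it below -/
import Mathlib

section
/- For every commutative ring k, every k-valued measure μ on the class of permutations, and every permutation X that admits an embedding of the permutation 1342 (the four-element permutation with orders 1<2<3<4 and 1≺3≺4≺2), one has μ(∅ ⊂ X) = 0, where ∅ ⊂ X denotes the embedding of the empty permutation into X. -/
/-- A permutation: a finite set equipped with two linear orders. -/
structure Perm2 : Type 1 where
  A : Type
  fin : Fintype A
  ord1 : LinearOrder A
  ord2 : LinearOrder A

attribute [instance] Perm2.fin

/-- The first order. -/
def Perm2.lt1 (X : Perm2) (a b : X.A) : Prop := X.ord1.lt a b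
/-- The second order. -/
def Perm2.lt2 (X : Perm2) (a b : X.A) : Prop := X.ord2.lt a b

/-- An embedding of permutations: an injective map preserving both orders. -/
structure Emb (X Y : Perm2) where
  f : X.A → Y.A
  inj : Function.Injective f
  mono1 : ∀ a b : X.A, X.lt1 a b → Y.lt1 (f a) (f b)
  mono2 : ∀ a b : X.A, X.lt2 a b → Y.lt2 (f a) (f b)

/-- Composition of embeddings. -/
def Emb.comp {X Y Z : Perm2} (j : Emb Y Z) (i : Emb X Y) : Emb X Z where
  f := j.f ∘ i.f
  inj := j.inj.comp i.inj
  mono1 := fun a b h => j.mono1 _ _ (i.mono1 a b h)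
  mono2 := fun a b h => j.mono2 _ _ (i.mono2 a b h)

/-- An amalgamation of the embeddings `i : Y → X` and `j : Y → Y'`. -/
structure Amalg {Y X Y' : Perm2} (i : Emb Y X) (j : Emb Y Y') : Type 1 where
  Z : Perm2
  i' : Emb Y' Z
  j' : Emb X Z
  comm : ∀ a : Y.A, i'.f (j.f a) = j'.f (i.f a)
  cover : ∀ z : Z.A, (∃ a, i'.f a = z) ∨ (∃ b, j'.f b = z)

/-- Isomorphism of amalgamations. -/
def AmalgIso {Y X Y' : Perm2} {i : Emb Y X} {j : Emb Y Y'} (A B : Amalg i j) : Prop :=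
  ∃ e : Emb A.Z B.Z, Function.Surjective e.f ∧
    (∀ a, e.f (A.i'.f a) = B.i'.f a) ∧ (∀ b, e.f (A.j'.f b) = B.j'.f b)

/-- A measure on the class of permutations valued in a commutative ring `k`. -/
structure PMeasure (k : Type) [CommRing k] : Type 1 where
  μ : ∀ {X Y : Perm2}, Emb X Y → k
  iso_invariant : ∀ {X Y X' Y' : Perm2} (i : Emb X Y) (i' : Emb X' Y')
    (u : Emb X X') (v : Emb Y Y'), Function.Surjective u.f → Function.Surjective v.f →
    (∀ a, v.f (i.f a) = i'.f (u.f a)) → μ i = μ i'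
  iso_one : ∀ {X Y : Perm2} (i : Emb X Y), Function.Surjective i.f → μ i = 1
  comp_mul : ∀ {X Y Z : Perm2} (i : Emb X Y) (j : Emb Y Z), μ (j.comp i) = μ j * μ i
  amalg_sum : ∀ {Y X Y' : Perm2} (i : Emb Y X) (j : Emb Y Y') (n : ℕ)
    (r : Fin n → Amalg i j), (∀ A : Amalg i j, ∃! α : Fin n, AmalgIso (r α) A) →
    μ i = ∑ α : Fin n, μ (r α).i'

/-- The permutation denoted by a sequence of distinct natural numbers: the underlying
set consists of the listed numbers, the first order is the numerical one, and the second
order is the order of appearance in the sequence. -/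
def listPerm (l : List ℕ) : Perm2 where
  A := {n : ℕ // n ∈ l.toFinset}
  fin := by infer_instance
  ord1 := LinearOrder.lift' (fun x => x.val) Subtype.val_injective
  ord2 := LinearOrder.lift' (fun x => l.idxOf x.val)
    (fun a b h => Subtype.ext ((List.idxOf_inj (List.mem_toFinset.mp a.2)).mp h))

/-- The subpermutation of `X` on a subset `S`, with the induced orders. -/
noncomputable def subPerm (X : Perm2) (S : Set X.A) : Perm2 where
  A := S
  fin := S.toFinite.fintype
  ord1 := @LinearOrder.lift' _ _ X.ord1 (fun x => x.val) Subtype.val_injective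
  ord2 := @LinearOrder.lift' _ _ X.ord2 (fun x => x.val) Subtype.val_injective

/-- The inclusion of a subpermutation. -/
noncomputable def subEmb (X : Perm2) (S : Set X.A) : Emb (subPerm X S) X where
  f := Subtype.val
  inj := Subtype.val_injective
  mono1 := fun _ _ h => h
  mono2 := fun _ _ h => h


section Aux

theorem lt1_def (l : List ℕ) (a b : (listPerm l).A) :
    (listPerm l).lt1 a b ↔ a.val < b.val := Iff.rfl

theorem lt2_def (l : List ℕ) (a b : (listPerm l).A) :
    (listPerm l).lt2 a b ↔ l.idxOf a.val < l.idxOf b.val := Iff.rfl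

instance (l : List ℕ) (a b : (listPerm l).A) : Decidable ((listPerm l).lt1 a b) :=
  decidable_of_iff _ (lt1_def l a b).symm

instance (l : List ℕ) (a b : (listPerm l).A) : Decidable ((listPerm l).lt2 a b) :=
  decidable_of_iff _ (lt2_def l a b).symm

instance (l : List ℕ) : DecidableEq (listPerm l).A :=
  fun a b => decidable_of_iff (a.val = b.val) Subtype.ext_iff.symm

/-- A concrete element of `listPerm l`. -/
def pt (l : List ℕ) (n : ℕ) (h : n ∈ l.toFinset := by decide) : (listPerm l).A := ⟨n, h⟩

theorem lt1_trans {X : Perm2} {a b c : X.A} (h : X.lt1 a b) (h' : X.lt1 b c) : X.lt1 a c := by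
  letI := X.ord1; exact lt_trans h h'

theorem lt2_trans {X : Perm2} {a b c : X.A} (h : X.lt2 a b) (h' : X.lt2 b c) : X.lt2 a c := by
  letI := X.ord2; exact lt_trans h h'

theorem lt1_asymm {X : Perm2} {a b : X.A} (h : X.lt1 a b) (h' : X.lt1 b a) : False := by
  letI := X.ord1; exact lt_asymm h h'

theorem lt1_ne {X : Perm2} {a b : X.A} (h : X.lt1 a b) : a ≠ b := by
  letI := X.ord1; exact ne_of_lt h

theorem lt2_ne {X : Perm2} {a b : X.A} (h : X.lt2 a b) : a ≠ b := by
  letI := X.ord2; exact ne_of_lt h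

theorem lt1_tri {X : Perm2} (a b : X.A) : X.lt1 a b ∨ a = b ∨ X.lt1 b a := by
  letI := X.ord1; exact lt_trichotomy a b

/-- Build an embedding of `listPerm`s from a map on values. -/
def mkEmb (l₁ l₂ : List ℕ) (g : ℕ → ℕ)
    (hmem : ∀ a : (listPerm l₁).A, g a.val ∈ l₂.toFinset)
    (hinj : ∀ a b : (listPerm l₁).A, g a.val = g b.val → a = b)
    (h1 : ∀ a b : (listPerm l₁).A, a.val < b.val → g a.val < g b.val)
    (h2 : ∀ a b : (listPerm l₁).A,
      l₁.idxOf a.val < l₁.idxOf b.val → l₂.idxOf (g a.val) < l₂.idxOf (g b.val)) :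
    Emb (listPerm l₁) (listPerm l₂) where
  f := fun a => ⟨g a.val, hmem a⟩
  inj := fun a b h => hinj a b (congrArg Subtype.val h)
  mono1 := fun a b h => h1 a b h
  mono2 := fun a b h => h2 a b h

def embI : Emb (listPerm [1,3]) (listPerm [1,3,2]) :=
  mkEmb _ _ id (by decide) (by decide) (by decide) (by decide)

def embJA : Emb (listPerm [1,3]) (listPerm [1,2,3]) :=
  mkEmb _ _ id (by decide) (by decide) (by decide) (by decide)

def embJB : Emb (listPerm [1,3]) (listPerm [1,2,3]) :=
  mkEmb _ _ (fun n => if n = 1 then 2 else n) (by decide) (by decide) (by decide) (by decide)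

def embI0 : Emb (listPerm [1,2,3]) (listPerm [1,2,4,3]) :=
  mkEmb _ _ (fun n => if n = 3 then 4 else n) (by decide) (by decide) (by decide) (by decide)

def embJ0A : Emb (listPerm [1,3,2]) (listPerm [1,2,4,3]) :=
  mkEmb _ _ (fun n => if n = 1 then 1 else if n = 3 then 4 else 3)
    (by decide) (by decide) (by decide) (by decide)

def embJ0B : Emb (listPerm [1,3,2]) (listPerm [1,2,4,3]) :=
  mkEmb _ _ (fun n => n + 1) (by decide) (by decide) (by decide) (by decide)

def embI1 : Emb (listPerm [1,2,3]) (listPerm [1,3,4,2]) :=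
  mkEmb _ _ (fun n => if n = 1 then 1 else n + 1) (by decide) (by decide) (by decide) (by decide)

def embJ1 : Emb (listPerm [1,3,2]) (listPerm [1,3,4,2]) :=
  mkEmb _ _ (fun n => if n = 3 then 4 else n) (by decide) (by decide) (by decide) (by decide)

def amA0 : Amalg embI embJA :=
  ⟨listPerm [1,2,4,3], embI0, embJ0A, by decide, by decide⟩

def amA1 : Amalg embI embJA :=
  ⟨listPerm [1,3,4,2], embI1, embJ1, by decide, by decide⟩

def amB0 : Amalg embI embJB :=
  ⟨listPerm [1,2,4,3], embI0, embJ0B, by decide, by decide⟩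

def rA : Fin 2 → Amalg embI embJA := ![amA0, amA1]
def rB : Fin 1 → Amalg embI embJB := ![amB0]

theorem elems123 : ∀ y : (listPerm [1,2,3]).A,
    y = pt [1,2,3] 1 ∨ y = pt [1,2,3] 2 ∨ y = pt [1,2,3] 3 := by decide

theorem elems132 : ∀ x : (listPerm [1,3,2]).A,
    x = pt [1,3,2] 1 ∨ x = pt [1,3,2] 3 ∨ x = pt [1,3,2] 2 := by decide

theorem elems1243 : ∀ z : (listPerm [1,2,4,3]).A,
    z = pt [1,2,4,3] 1 ∨ z = pt [1,2,4,3] 2 ∨ z = pt [1,2,4,3] 4 ∨ z = pt [1,2,4,3] 3 := by decide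

end Aux

theorem elems1342 : ∀ z : (listPerm [1,3,4,2]).A,
    z = pt [1,3,4,2] 1 ∨ z = pt [1,3,4,2] 3 ∨ z = pt [1,3,4,2] 4 ∨ z = pt [1,3,4,2] 2 := by decide

theorem classA (A : Amalg embI embJA) : ∃! α : Fin 2, AmalgIso (rA α) A := by
  have ca : A.i'.f (pt [1,2,3] 1) = A.j'.f (pt [1,3,2] 1) := A.comm (pt [1,3] 1)
  have cb : A.i'.f (pt [1,2,3] 3) = A.j'.f (pt [1,3,2] 3) := A.comm (pt [1,3] 3)
  have f1 : A.Z.lt1 (A.i'.f (pt [1,2,3] 1)) (A.i'.f (pt [1,2,3] 2)) := A.i'.mono1 _ _ (by decide)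
  have f2 : A.Z.lt1 (A.i'.f (pt [1,2,3] 2)) (A.i'.f (pt [1,2,3] 3)) := A.i'.mono1 _ _ (by decide)
  have f3 : A.Z.lt1 (A.i'.f (pt [1,2,3] 1)) (A.j'.f (pt [1,3,2] 2)) := by
    rw [ca]; exact A.j'.mono1 _ _ (by decide)
  have f4 : A.Z.lt1 (A.j'.f (pt [1,3,2] 2)) (A.i'.f (pt [1,2,3] 3)) := by
    rw [cb]; exact A.j'.mono1 _ _ (by decide)
  have g1 : A.Z.lt2 (A.i'.f (pt [1,2,3] 1)) (A.i'.f (pt [1,2,3] 2)) := A.i'.mono2 _ _ (by decide)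
  have g2 : A.Z.lt2 (A.i'.f (pt [1,2,3] 2)) (A.i'.f (pt [1,2,3] 3)) := A.i'.mono2 _ _ (by decide)
  have g3 : A.Z.lt2 (A.i'.f (pt [1,2,3] 1)) (A.i'.f (pt [1,2,3] 3)) := A.i'.mono2 _ _ (by decide)
  have g4 : A.Z.lt2 (A.i'.f (pt [1,2,3] 3)) (A.j'.f (pt [1,3,2] 2)) := by
    rw [cb]; exact A.j'.mono2 _ _ (by decide)
  have g5 : A.Z.lt2 (A.i'.f (pt [1,2,3] 2)) (A.j'.f (pt [1,3,2] 2)) := lt2_trans g2 g4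
  have g6 : A.Z.lt2 (A.i'.f (pt [1,2,3] 1)) (A.j'.f (pt [1,3,2] 2)) := lt2_trans g3 g4
  have h13 : A.Z.lt1 (A.i'.f (pt [1,2,3] 1)) (A.i'.f (pt [1,2,3] 3)) := lt1_trans f1 f2
  have nuv : A.i'.f (pt [1,2,3] 2) ≠ A.j'.f (pt [1,3,2] 2) := lt2_ne g5
  rcases lt1_tri (A.i'.f (pt [1,2,3] 2)) (A.j'.f (pt [1,3,2] 2)) with huv | hequv | hvu
  · -- case u < v : amalgam amA0 = 1243
    refine ⟨0, ⟨(⟨fun w => if w.val = 1 then A.i'.f (pt [1,2,3] 1) else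
        if w.val = 2 then A.i'.f (pt [1,2,3] 2) else
        if w.val = 4 then A.i'.f (pt [1,2,3] 3) else A.j'.f (pt [1,3,2] 2),
        ?_, ?_, ?_⟩ : Emb (listPerm [1,2,4,3]) A.Z), ?_, ?_, ?_⟩, ?_⟩
    · intro w1 w2 hw
      rcases elems1243 w1 with rfl | rfl | rfl | rfl <;>
        rcases elems1243 w2 with rfl | rfl | rfl | rfl <;>
        first
          | rfl
          | exact absurd hw (lt1_ne f1) | exact absurd hw (lt1_ne f1).symm
          | exact absurd hw (lt1_ne h13) | exact absurd hw (lt1_ne h13).symm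
          | exact absurd hw (lt1_ne f3) | exact absurd hw (lt1_ne f3).symm
          | exact absurd hw (lt1_ne f2) | exact absurd hw (lt1_ne f2).symm
          | exact absurd hw nuv | exact absurd hw nuv.symm
          | exact absurd hw (lt1_ne f4) | exact absurd hw (lt1_ne f4).symm
    · intro w1 w2 hw
      rcases elems1243 w1 with rfl | rfl | rfl | rfl <;>
        rcases elems1243 w2 with rfl | rfl | rfl | rfl <;>
        first
          | exact absurd hw (by decide)
          | exact f1 | exact f3 | exact h13 | exact huv | exact f2 | exact f4
    · intro w1 w2 hw
      rcases elems1243 w1 with rfl | rfl | rfl | rfl <;>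
        rcases elems1243 w2 with rfl | rfl | rfl | rfl <;>
        first
          | exact absurd hw (by decide)
          | exact g1 | exact g3 | exact g6 | exact g2 | exact g5 | exact g4
    · intro z
      rcases A.cover z with ⟨y, hy⟩ | ⟨x, hx⟩
      · rcases elems123 y with rfl | rfl | rfl
        · exact ⟨pt [1,2,4,3] 1, hy⟩
        · exact ⟨pt [1,2,4,3] 2, hy⟩
        · exact ⟨pt [1,2,4,3] 4, hy⟩
      · rcases elems132 x with rfl | rfl | rfl
        · exact ⟨pt [1,2,4,3] 1, ca.trans hx⟩
        · exact ⟨pt [1,2,4,3] 4, cb.trans hx⟩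
        · exact ⟨pt [1,2,4,3] 3, hx⟩
    · intro a
      rcases elems123 a with rfl | rfl | rfl <;> rfl
    · intro b
      rcases elems132 b with rfl | rfl | rfl
      · exact ca
      · exact cb
      · rfl
    · intro beta hbeta
      fin_cases beta
      · rfl
      · exfalso
        obtain ⟨e1, hs1, hi1, hj1⟩ := hbeta
        have t := e1.mono1 (embJ1.f (pt [1,3,2] 2)) (embI1.f (pt [1,2,3] 2))
          ((by decide : (listPerm [1,3,4,2]).lt1 (embJ1.f (pt [1,3,2] 2)) (embI1.f (pt [1,2,3] 2))))
        have t1 : e1.f (embJ1.f (pt [1,3,2] 2)) = A.j'.f (pt [1,3,2] 2) := hj1 (pt [1,3,2] 2)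
        have t2 : e1.f (embI1.f (pt [1,2,3] 2)) = A.i'.f (pt [1,2,3] 2) := hi1 (pt [1,2,3] 2)
        rw [t1, t2] at t
        exact lt1_asymm huv t
  · exact absurd hequv nuv
  · -- case v < u : amalgam amA1 = 1342
    refine ⟨1, ⟨(⟨fun w => if w.val = 1 then A.i'.f (pt [1,2,3] 1) else
        if w.val = 3 then A.i'.f (pt [1,2,3] 2) else
        if w.val = 4 then A.i'.f (pt [1,2,3] 3) else A.j'.f (pt [1,3,2] 2),
        ?_, ?_, ?_⟩ : Emb (listPerm [1,3,4,2]) A.Z), ?_, ?_, ?_⟩, ?_⟩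
    · intro w1 w2 hw
      rcases elems1342 w1 with rfl | rfl | rfl | rfl <;>
        rcases elems1342 w2 with rfl | rfl | rfl | rfl <;>
        first
          | rfl
          | exact absurd hw (lt1_ne f1) | exact absurd hw (lt1_ne f1).symm
          | exact absurd hw (lt1_ne h13) | exact absurd hw (lt1_ne h13).symm
          | exact absurd hw (lt1_ne f3) | exact absurd hw (lt1_ne f3).symm
          | exact absurd hw (lt1_ne f2) | exact absurd hw (lt1_ne f2).symm
          | exact absurd hw nuv | exact absurd hw nuv.symm
          | exact absurd hw (lt1_ne f4) | exact absurd hw (lt1_ne f4).symm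
    · intro w1 w2 hw
      rcases elems1342 w1 with rfl | rfl | rfl | rfl <;>
        rcases elems1342 w2 with rfl | rfl | rfl | rfl <;>
        first
          | exact absurd hw (by decide)
          | exact f1 | exact f3 | exact h13 | exact hvu | exact f2 | exact f4
    · intro w1 w2 hw
      rcases elems1342 w1 with rfl | rfl | rfl | rfl <;>
        rcases elems1342 w2 with rfl | rfl | rfl | rfl <;>
        first
          | exact absurd hw (by decide)
          | exact g1 | exact g3 | exact g6 | exact g2 | exact g5 | exact g4
    · intro z
      rcases A.cover z with ⟨y, hy⟩ | ⟨x, hx⟩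
      · rcases elems123 y with rfl | rfl | rfl
        · exact ⟨pt [1,3,4,2] 1, hy⟩
        · exact ⟨pt [1,3,4,2] 3, hy⟩
        · exact ⟨pt [1,3,4,2] 4, hy⟩
      · rcases elems132 x with rfl | rfl | rfl
        · exact ⟨pt [1,3,4,2] 1, ca.trans hx⟩
        · exact ⟨pt [1,3,4,2] 4, cb.trans hx⟩
        · exact ⟨pt [1,3,4,2] 2, hx⟩
    · intro a
      rcases elems123 a with rfl | rfl | rfl <;> rfl
    · intro b
      rcases elems132 b with rfl | rfl | rfl
      · exact ca
      · exact cb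
      · rfl
    · intro beta hbeta
      fin_cases beta
      · exfalso
        obtain ⟨e0, hs0, hi0, hj0⟩ := hbeta
        have t := e0.mono1 (embI0.f (pt [1,2,3] 2)) (embJ0A.f (pt [1,3,2] 2))
          ((by decide : (listPerm [1,2,4,3]).lt1 (embI0.f (pt [1,2,3] 2)) (embJ0A.f (pt [1,3,2] 2))))
        have t1 : e0.f (embI0.f (pt [1,2,3] 2)) = A.i'.f (pt [1,2,3] 2) := hi0 (pt [1,2,3] 2)
        have t2 : e0.f (embJ0A.f (pt [1,3,2] 2)) = A.j'.f (pt [1,3,2] 2) := hj0 (pt [1,3,2] 2)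
        rw [t1, t2] at t
        exact lt1_asymm hvu t
      · rfl

theorem classB (A : Amalg embI embJB) : ∃! α : Fin 1, AmalgIso (rB α) A := by
  have ca : A.i'.f (pt [1,2,3] 2) = A.j'.f (pt [1,3,2] 1) := A.comm (pt [1,3] 1)
  have cb : A.i'.f (pt [1,2,3] 3) = A.j'.f (pt [1,3,2] 3) := A.comm (pt [1,3] 3)
  have f1 : A.Z.lt1 (A.i'.f (pt [1,2,3] 1)) (A.i'.f (pt [1,2,3] 2)) := A.i'.mono1 _ _ (by decide)
  have f3 : A.Z.lt1 (A.i'.f (pt [1,2,3] 2)) (A.j'.f (pt [1,3,2] 2)) := by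
    rw [ca]; exact A.j'.mono1 _ _ (by decide)
  have f4 : A.Z.lt1 (A.j'.f (pt [1,3,2] 2)) (A.i'.f (pt [1,2,3] 3)) := by
    rw [cb]; exact A.j'.mono1 _ _ (by decide)
  have g1 : A.Z.lt2 (A.i'.f (pt [1,2,3] 1)) (A.i'.f (pt [1,2,3] 2)) := A.i'.mono2 _ _ (by decide)
  have g2 : A.Z.lt2 (A.i'.f (pt [1,2,3] 2)) (A.i'.f (pt [1,2,3] 3)) := A.i'.mono2 _ _ (by decide)
  have g4 : A.Z.lt2 (A.i'.f (pt [1,2,3] 3)) (A.j'.f (pt [1,3,2] 2)) := by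
    rw [cb]; exact A.j'.mono2 _ _ (by decide)
  have huv : A.Z.lt1 (A.i'.f (pt [1,2,3] 1)) (A.j'.f (pt [1,3,2] 2)) := lt1_trans f1 f3
  have hub : A.Z.lt1 (A.i'.f (pt [1,2,3] 1)) (A.i'.f (pt [1,2,3] 3)) := lt1_trans huv f4
  have hab : A.Z.lt1 (A.i'.f (pt [1,2,3] 2)) (A.i'.f (pt [1,2,3] 3)) := lt1_trans f3 f4
  have gub : A.Z.lt2 (A.i'.f (pt [1,2,3] 1)) (A.i'.f (pt [1,2,3] 3)) := lt2_trans g1 g2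
  have guv : A.Z.lt2 (A.i'.f (pt [1,2,3] 1)) (A.j'.f (pt [1,3,2] 2)) := lt2_trans gub g4
  have gav : A.Z.lt2 (A.i'.f (pt [1,2,3] 2)) (A.j'.f (pt [1,3,2] 2)) := lt2_trans g2 g4
  refine ⟨0, ⟨(⟨fun w => if w.val = 1 then A.i'.f (pt [1,2,3] 1) else
      if w.val = 2 then A.i'.f (pt [1,2,3] 2) else
      if w.val = 4 then A.i'.f (pt [1,2,3] 3) else A.j'.f (pt [1,3,2] 2),
      ?_, ?_, ?_⟩ : Emb (listPerm [1,2,4,3]) A.Z), ?_, ?_, ?_⟩, ?_⟩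
  · intro w1 w2 hw
    rcases elems1243 w1 with rfl | rfl | rfl | rfl <;>
      rcases elems1243 w2 with rfl | rfl | rfl | rfl <;>
      first
        | rfl
        | exact absurd hw (lt1_ne f1) | exact absurd hw (lt1_ne f1).symm
        | exact absurd hw (lt1_ne hub) | exact absurd hw (lt1_ne hub).symm
        | exact absurd hw (lt1_ne huv) | exact absurd hw (lt1_ne huv).symm
        | exact absurd hw (lt1_ne hab) | exact absurd hw (lt1_ne hab).symm
        | exact absurd hw (lt1_ne f3) | exact absurd hw (lt1_ne f3).symm
        | exact absurd hw (lt1_ne f4) | exact absurd hw (lt1_ne f4).symm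
  · intro w1 w2 hw
    rcases elems1243 w1 with rfl | rfl | rfl | rfl <;>
      rcases elems1243 w2 with rfl | rfl | rfl | rfl <;>
      first
        | exact absurd hw (by decide)
        | exact f1 | exact huv | exact hub | exact f3 | exact hab | exact f4
  · intro w1 w2 hw
    rcases elems1243 w1 with rfl | rfl | rfl | rfl <;>
      rcases elems1243 w2 with rfl | rfl | rfl | rfl <;>
      first
        | exact absurd hw (by decide)
        | exact g1 | exact gub | exact guv | exact g2 | exact gav | exact g4
  · intro z
    rcases A.cover z with ⟨y, hy⟩ | ⟨x, hx⟩
    · rcases elems123 y with rfl | rfl | rfl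
      · exact ⟨pt [1,2,4,3] 1, hy⟩
      · exact ⟨pt [1,2,4,3] 2, hy⟩
      · exact ⟨pt [1,2,4,3] 4, hy⟩
    · rcases elems132 x with rfl | rfl | rfl
      · exact ⟨pt [1,2,4,3] 2, ca.trans hx⟩
      · exact ⟨pt [1,2,4,3] 4, cb.trans hx⟩
      · exact ⟨pt [1,2,4,3] 3, hx⟩
  · intro a
    rcases elems123 a with rfl | rfl | rfl <;> rfl
  · intro b
    rcases elems132 b with rfl | rfl | rfl
    · exact ca
    · exact cb
    · rfl
  · intro beta _
    exact Subsingleton.elim beta 0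

def embE : Emb (listPerm []) (listPerm [1,2,3]) where
  f := fun a => (List.not_mem_nil (List.mem_toFinset.mp a.2)).elim
  inj := fun a => (List.not_mem_nil (List.mem_toFinset.mp a.2)).elim
  mono1 := fun a _ _ => (List.not_mem_nil (List.mem_toFinset.mp a.2)).elim
  mono2 := fun a _ _ => (List.not_mem_nil (List.mem_toFinset.mp a.2)).elim

theorem emb_empty_eq {W : Perm2} (e e' : Emb (listPerm []) W) : e = e' := by
  obtain ⟨f, i1, m1, m2⟩ := e
  obtain ⟨f', i1', m1', m2'⟩ := e'
  have hf : f = f' := funext fun a => (List.not_mem_nil (List.mem_toFinset.mp a.2)).elim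
  subst hf
  rfl

theorem key (k : Type) [CommRing k] (m : PMeasure k) : m.μ embI1 = 0 := by
  have hA := m.amalg_sum embI embJA 2 rA classA
  have hB := m.amalg_sum embI embJB 1 rB classB
  rw [Fin.sum_univ_two] at hA
  rw [Fin.sum_univ_one] at hB
  have h0 : (rA 0).i' = embI0 := rfl
  have h1 : (rA 1).i' = embI1 := rfl
  have h2 : (rB 0).i' = embI0 := rfl
  rw [h0, h1] at hA
  rw [h2] at hB
  rw [hB] at hA
  exact left_eq_add.mp hA

/-- If a permutation X admits an embedding of the permutation 1342, then every measure
assigns 0 to the embedding of the empty permutation into X. -/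
theorem measure_of_empty_into_perm_containing_1342 (k : Type) [CommRing k] (m : PMeasure k)
    (X : Perm2) (h : Nonempty (Emb (listPerm [1,3,4,2]) X)) (e : Emb (listPerm []) X) :
    m.μ e = 0 := by
  obtain ⟨φ⟩ := h
  have he : e = φ.comp (embI1.comp embE) := emb_empty_eq e _
  rw [he, m.comp_mul, m.comp_mul, key k m, zero_mul, mul_zero]
end

section
/- For every permutation Y, every proper subpermutation X ⊊ Y, and every integer h ≥ 1, there exist a permutation Z and an embedding f : X → Z such that there are at least h distinct embeddings g : Y → Z whose restriction to X equals f. -/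
/-- Given a permutation Y, a proper subpermutation X of Y, and h ≥ 1, there is a
permutation Z and an embedding f : X → Z admitting at least h distinct extensions to Y. -/
theorem extension_property (Y : Perm2) (S : Set Y.A) (hS : S ≠ Set.univ) (h : ℕ) (hh : 1 ≤ h) :
    ∃ (Z : Perm2) (f : Emb (subPerm Y S) Z) (g : Fin h → Emb Y Z),
      Function.Injective g ∧ ∀ (α : Fin h) (a : (subPerm Y S).A), (g α).f a.val = f.f a := by
  classical
  obtain ⟨y0, hy0⟩ : ∃ y : Y.A, y ∉ S := by
    by_contra hc
    push_neg at hc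
    exact hS (Set.eq_univ_of_forall hc)
  let Z : Perm2 :=
    { A := Y.A × Fin h
      fin := inferInstance
      ord1 := letI := Y.ord1; inferInstanceAs (LinearOrder (Lex (Y.A × Fin h)))
      ord2 := letI := Y.ord2; inferInstanceAs (LinearOrder (Lex (Y.A × Fin h))) }
  have hlt1 : ∀ (a b : Y.A) (α β : Fin h), Y.lt1 a b → Z.lt1 (a, α) (b, β) := by
    intro a b α β hab
    exact Prod.Lex.left _ _ hab
  have hlt2 : ∀ (a b : Y.A) (α β : Fin h), Y.lt2 a b → Z.lt2 (a, α) (b, β) := by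
    intro a b α β hab
    exact Prod.Lex.left _ _ hab
  let g : Fin h → Emb Y Z := fun α =>
    { f := fun a => (a, if a ∈ S then (⟨0, hh⟩ : Fin h) else α)
      inj := fun a b hab => congrArg Prod.fst hab
      mono1 := fun a b hab => hlt1 a b _ _ hab
      mono2 := fun a b hab => hlt2 a b _ _ hab }
  refine ⟨Z, ⟨fun a => (a.val, ⟨0, hh⟩), ?_, ?_, ?_⟩, g, ?_, ?_⟩
  · intro a b hab
    exact Subtype.ext (congrArg Prod.fst hab)
  · intro a b hab; exact hlt1 _ _ _ _ hab
  · intro a b hab; exact hlt2 _ _ _ _ hab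
  · intro α β hab
    have := congrArg (fun e => (e.f y0).2) hab
    simpa [g, hy0] using this
  · intro α a
    simp [g, a.2]
end
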